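/- For every ε, α ∈ (0,1) there exists a constant C = C(ε, α) > 0 such that for every n-player m-action game, every correlated equilibrium x ∈ Δ(A), and every k ≥ C·(m·ln m + ln n), the empirical distribution s^k of k i.i.d. samples from x is an ε-correlated equilibrium with probability greater than 1 − α. -/

import Mathlib

open Finset

open scoped Classical

noncomputable section

/-- `x` is a probability distribution on the finite type `A`. -/
def IsDist {A : Type*} [Fintype A] (x : A → ℝ) : Prop :=
  (∀ a, 0 ≤ x a) ∧ ∑ a, x a = 1

/-- Empirical distribution of `k` sampled elements of `A`. -/
def empJoint {A : Type*} [Fintype A] [DecidableEq A] (k : ℕ) (a : Fin k → A) : A → ℝ :=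
  fun p => ((univ.filter fun t => a t = p).card : ℝ) / k

/-- Probability of the event `E` over `k` i.i.d. samples from the distribution `x`. -/
def PrJoint {A : Type*} [Fintype A] (k : ℕ) (x : A → ℝ) (E : (Fin k → A) → Prop) : ℝ :=
  ∑ a : Fin k → A, if E a then ∏ t, x (a t) else 0

/-- `x ∈ Δ(A)` is an `ε`-coarse correlated equilibrium of the game `u`:
for every player `i` and action `j`, the expected regret for not playing `j`
is at most `ε`. -/
def IsCCE {n m : ℕ} (u : Fin n → (Fin n → Fin m) → ℝ)
    (x : (Fin n → Fin m) → ℝ) (ε : ℝ) : Prop :=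
  ∀ (i : Fin n) (j : Fin m),
    ∑ a : Fin n → Fin m, x a * (u i (Function.update a i j) - u i a) ≤ ε

/-- `x ∈ Δ(A)` is an `ε`-correlated equilibrium of the game `u`:
for every player `i` and deviation map `f : [m] → [m]`, the expected regret is
at most `ε`. -/
def IsCE {n m : ℕ} (u : Fin n → (Fin n → Fin m) → ℝ)
    (x : (Fin n → Fin m) → ℝ) (ε : ℝ) : Prop :=
  ∀ (i : Fin n) (f : Fin m → Fin m),
    ∑ a : Fin n → Fin m, x a * (u i (Function.update a i (f (a i))) - u i a) ≤ ε

/-- A distribution on a finite set is `k`-uniform if every probability is an integer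
multiple of `1/k` (equivalently, it is uniform over a size-`k` multiset). -/
def IsKUniform {A : Type*} [Fintype A] (k : ℕ) (x : A → ℝ) : Prop :=
  ∀ a, ∃ c : ℕ, x a = (c : ℝ) / k
section Aux

variable {A : Type*} [Fintype A]

lemma sum_prod_pow (h : A → ℝ) (k : ℕ) :
    ∑ a : Fin k → A, ∏ t, h (a t) = (∑ b, h b) ^ k := by
  rw [Finset.sum_pow' univ h k]
  rw [Fintype.piFinset_univ]

lemma prJoint_mono (k : ℕ) (x : A → ℝ) (hx : ∀ a, 0 ≤ x a)
    (E F : (Fin k → A) → Prop) (h : ∀ a, E a → F a) :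
    PrJoint k x E ≤ PrJoint k x F := by
  apply Finset.sum_le_sum
  intro a _
  by_cases hE : E a
  · simp [hE, h a hE]
  · simp only [hE, if_false]
    split <;> [exact Finset.prod_nonneg fun t _ => hx _; exact le_rfl]

lemma prJoint_union {P : Type*} [Fintype P] (k : ℕ) (x : A → ℝ) (hx : ∀ a, 0 ≤ x a)
    (E : P → (Fin k → A) → Prop) :
    PrJoint k x (fun a => ∃ p, E p a) ≤ ∑ p, PrJoint k x (E p) := by
  unfold PrJoint
  rw [Finset.sum_comm]
  apply Finset.sum_le_sum
  intro a _
  by_cases hE : ∃ p, E p a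
  · rw [if_pos hE]
    obtain ⟨p, hp⟩ := hE
    have h0 := Finset.single_le_sum (f := fun p => if E p a then ∏ t, x (a t) else 0)
      (fun q _ => by split
                     · exact Finset.prod_nonneg fun t _ => hx _
                     · exact le_rfl)
      (Finset.mem_univ p)
    rw [if_pos hp] at h0
    exact h0
  · rw [if_neg hE]
    exact Finset.sum_nonneg fun q _ => by
      split <;> [exact Finset.prod_nonneg fun t _ => hx _; exact le_rfl]

lemma prJoint_compl (k : ℕ) (x : A → ℝ) (hx : IsDist x) (E : (Fin k → A) → Prop) :
    PrJoint k x E = 1 - PrJoint k x (fun a => ¬ E a) := by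
  have htot : PrJoint k x E + PrJoint k x (fun a => ¬ E a) = 1 := by
    unfold PrJoint
    rw [← Finset.sum_add_distrib]
    have h1 : ∑ a : Fin k → A, ∏ t, x (a t) = 1 := by rw [sum_prod_pow, hx.2, one_pow]
    rw [← h1]
    apply Finset.sum_congr rfl
    intro a _
    by_cases hE : E a
    · rw [if_pos hE, if_neg (not_not_intro hE), add_zero]
    · rw [if_neg hE, if_pos hE, zero_add]
  linarith

lemma chord_exp {s lam : ℝ} (hs1 : -1 ≤ s) (hs2 : s ≤ 1) :
    Real.exp (lam * s) ≤ Real.cosh lam + s * Real.sinh lam := by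
  have h := convexOn_exp.2 (Set.mem_univ (-lam)) (Set.mem_univ lam)
    (by linarith : (0:ℝ) ≤ (1 - s) / 2) (by linarith : (0:ℝ) ≤ (1 + s) / 2) (by ring)
  simp only [smul_eq_mul] at h
  have harg : (1 - s) / 2 * (-lam) + (1 + s) / 2 * lam = lam * s := by ring
  rw [harg] at h
  rw [Real.cosh_eq, Real.sinh_eq]
  calc Real.exp (lam * s) ≤ (1 - s) / 2 * Real.exp (-lam) + (1 + s) / 2 * Real.exp lam := h
    _ = (Real.exp lam + Real.exp (-lam)) / 2 + s * ((Real.exp lam - Real.exp (-lam)) / 2) := by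
        ring

lemma chernoff (x : A → ℝ) (hx : IsDist x) (g : A → ℝ)
    (hg1 : ∀ b, -1 ≤ g b) (hg2 : ∀ b, g b ≤ 1)
    (hmean : ∑ b, x b * g b ≤ 0) (k : ℕ) {ε : ℝ} (hε : 0 < ε) :
    PrJoint k x (fun a => (k : ℝ) * ε < ∑ t, g (a t)) ≤ Real.exp (-(k : ℝ) * ε ^ 2 / 2) := by
  have hmgf : ∑ b, x b * Real.exp (ε * g b) ≤ Real.exp (ε ^ 2 / 2) := by
    calc ∑ b, x b * Real.exp (ε * g b)
        ≤ ∑ b, x b * (Real.cosh ε + g b * Real.sinh ε) := by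
          apply Finset.sum_le_sum
          intro b _
          exact mul_le_mul_of_nonneg_left (chord_exp (hg1 b) (hg2 b)) (hx.1 b)
      _ = Real.cosh ε * ∑ b, x b + (∑ b, x b * g b) * Real.sinh ε := by
          rw [Finset.sum_mul, Finset.mul_sum, ← Finset.sum_add_distrib]
          congr 1; ext b; ring
      _ ≤ Real.cosh ε := by
          rw [hx.2, mul_one]
          nlinarith [(Real.sinh_nonneg_iff.2 hε.le), mul_nonpos_of_nonpos_of_nonneg hmean
            ((Real.sinh_nonneg_iff.2 hε.le))]
      _ ≤ Real.exp (ε ^ 2 / 2) := Real.cosh_le_exp_half_sq ε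
  have hstep : PrJoint k x (fun a => (k : ℝ) * ε < ∑ t, g (a t))
      ≤ Real.exp (-(ε * ((k : ℝ) * ε))) * ∑ a : Fin k → A, ∏ t, (x (a t) * Real.exp (ε * g (a t))) := by
    rw [Finset.mul_sum]
    apply Finset.sum_le_sum
    intro a _
    have hprod : ∏ t, (x (a t) * Real.exp (ε * g (a t)))
        = (∏ t, x (a t)) * Real.exp (ε * ∑ t, g (a t)) := by
      rw [Finset.prod_mul_distrib, ← Real.exp_sum]
      congr 1
      rw [Finset.mul_sum]
    rw [hprod]
    by_cases hE : (k : ℝ) * ε < ∑ t, g (a t)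
    · simp only [hE, if_true]
      have h1 : (1 : ℝ) ≤ Real.exp (-(ε * ((k : ℝ) * ε))) * Real.exp (ε * ∑ t, g (a t)) := by
        rw [← Real.exp_add]
        apply Real.one_le_exp
        nlinarith
      have hw : 0 ≤ ∏ t, x (a t) := Finset.prod_nonneg fun t _ => hx.1 _
      calc ∏ t, x (a t) = (∏ t, x (a t)) * 1 := (mul_one _).symm
        _ ≤ (∏ t, x (a t)) * (Real.exp (-(ε * ((k : ℝ) * ε))) * Real.exp (ε * ∑ t, g (a t))) :=
            mul_le_mul_of_nonneg_left h1 hw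
        _ = Real.exp (-(ε * ((k : ℝ) * ε))) * ((∏ t, x (a t)) * Real.exp (ε * ∑ t, g (a t))) := by
            ring
    · simp only [hE, if_false]
      exact mul_nonneg (Real.exp_nonneg _) (mul_nonneg
        (Finset.prod_nonneg fun t _ => hx.1 _) (Real.exp_nonneg _))
  have hpow : ∑ a : Fin k → A, ∏ t, (x (a t) * Real.exp (ε * g (a t)))
      = (∑ b, x b * Real.exp (ε * g b)) ^ k := sum_prod_pow (fun b => x b * Real.exp (ε * g b)) k
  have hbase : (0:ℝ) ≤ ∑ b, x b * Real.exp (ε * g b) :=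
    Finset.sum_nonneg fun b _ => mul_nonneg (hx.1 b) (Real.exp_nonneg _)
  calc PrJoint k x (fun a => (k : ℝ) * ε < ∑ t, g (a t))
      ≤ Real.exp (-(ε * ((k : ℝ) * ε))) * (∑ b, x b * Real.exp (ε * g b)) ^ k := by
        rw [← hpow]; exact hstep
    _ ≤ Real.exp (-(ε * ((k : ℝ) * ε))) * Real.exp (ε ^ 2 / 2) ^ k := by
        apply mul_le_mul_of_nonneg_left _ (Real.exp_nonneg _)
        exact pow_le_pow_left₀ hbase hmgf k
    _ = Real.exp (-(k : ℝ) * ε ^ 2 / 2) := by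
        rw [← Real.exp_nat_mul, ← Real.exp_add]
        congr 1; ring

end Aux

/-- For every `ε, α ∈ (0,1)` there is a constant `C = C(ε,α) > 0` such
that for every `n`-player `m`-action game, every correlated equilibrium `x`, and every
`k ≥ C(m ln m + ln n)`, the empirical distribution of `k` i.i.d. samples from `x` is an
`ε`-correlated equilibrium with probability greater than `1 − α`. -/
theorem stmt8 (ε α : ℝ) (hε : 0 < ε ∧ ε < 1) (hα : 0 < α ∧ α < 1) :
    ∃ C > (0 : ℝ), ∀ (n m : ℕ), 0 < n → 0 < m →
      ∀ u : Fin n → (Fin n → Fin m) → ℝ, (∀ i a, 0 ≤ u i a ∧ u i a ≤ 1) →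
      ∀ x : (Fin n → Fin m) → ℝ, IsDist x → IsCE u x 0 →
      ∀ k : ℕ, (k : ℝ) ≥ C * ((m : ℝ) * Real.log m + Real.log n) →
        PrJoint k x (fun a => IsCE u (empJoint k a) ε) > 1 - α := by
  obtain ⟨hε0, hε1⟩ := hε
  obtain ⟨hα0, hα1⟩ := hα
  have hlog2 : 0 < Real.log 2 := Real.log_pos (by norm_num)
  have hlogα : 0 < Real.log (2 / α) :=
    Real.log_pos (by rw [lt_div_iff₀ hα0]; linarith)
  refine ⟨(2 / ε ^ 2) * (1 + Real.log (2 / α) / Real.log 2), by positivity, ?_⟩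
  intro n m hn hm u hu x hx hce k hk
  rcases Nat.lt_or_ge m 2 with hm2 | hm2
  · -- m = 1 : the game is trivial, every distribution is a CE
    have hm1 : m = 1 := by omega
    subst hm1
    have hCE : ∀ a : Fin k → (Fin n → Fin 1), IsCE u (empJoint k a) ε := by
      intro a i f
      have hfix : ∀ p : Fin n → Fin 1, Function.update p i (f (p i)) = p := by
        intro p
        have : f (p i) = p i := Subsingleton.elim _ _
        rw [this, Function.update_eq_self]
      have : ∀ p : Fin n → Fin 1,
          empJoint k a p * (u i (Function.update p i (f (p i))) - u i p) = 0 := by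
        intro p; rw [hfix p]; ring
      rw [Finset.sum_congr rfl fun p _ => this p, Finset.sum_const_zero]
      exact hε0.le
    have h1 : PrJoint k x (fun a => IsCE u (empJoint k a) ε) = 1 := by
      unfold PrJoint
      rw [Finset.sum_congr rfl fun a _ => if_pos (hCE a), sum_prod_pow, hx.2, one_pow]
    rw [h1]; linarith
  · -- m ≥ 2 : concentration + union bound
    set A := Fin n → Fin 1 with hA  -- dummy, unused
    clear hA A
    have hm1 : (2 : ℝ) ≤ (m : ℝ) := by exact_mod_cast hm2
    have hn1 : (1 : ℝ) ≤ (n : ℝ) := by exact_mod_cast hn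
    have hlogm : Real.log 2 ≤ Real.log m := Real.log_le_log (by norm_num) hm1
    have hlogn : 0 ≤ Real.log n := Real.log_nonneg hn1
    set L : ℝ := (m : ℝ) * Real.log m + Real.log n with hL
    have hL2 : Real.log 2 ≤ L := by
      have : Real.log 2 ≤ (m : ℝ) * Real.log m := by nlinarith
      linarith
    have hLpos : 0 < L := lt_of_lt_of_le hlog2 hL2
    have hkpos : (0 : ℝ) < k := by
      have : (0:ℝ) < (2 / ε ^ 2) * (1 + Real.log (2 / α) / Real.log 2) * L := by positivity
      linarith [hk]
    -- the regret functions
    set r : Fin n → (Fin m → Fin m) → (Fin n → Fin m) → ℝ :=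
      fun i f p => u i (Function.update p i (f (p i))) - u i p with hr
    have hr1 : ∀ i f p, -1 ≤ r i f p := by
      intro i f p
      have h1 := hu i (Function.update p i (f (p i)))
      have h2 := hu i p
      simp only [hr]; linarith [h1.1, h2.2]
    have hr2 : ∀ i f p, r i f p ≤ 1 := by
      intro i f p
      have h1 := hu i (Function.update p i (f (p i)))
      have h2 := hu i p
      simp only [hr]; linarith [h1.2, h2.1]
    -- event inclusion
    have hincl : ∀ a : Fin k → (Fin n → Fin m), ¬ IsCE u (empJoint k a) ε →
        ∃ q : Fin n × (Fin m → Fin m), (k : ℝ) * ε < ∑ t, r q.1 q.2 (a t) := by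
      intro a hnot
      unfold IsCE at hnot
      push_neg at hnot
      obtain ⟨i, f, hif⟩ := hnot
      refine ⟨(i, f), ?_⟩
      have hemp : ∑ p : Fin n → Fin m, empJoint k a p *
          (u i (Function.update p i (f (p i))) - u i p) = (∑ t, r i f (a t)) / k := by
        unfold empJoint
        rw [← Finset.sum_fiberwise' univ a (r i f), Finset.sum_div]
        apply Finset.sum_congr rfl
        intro p _
        rw [Finset.sum_const, nsmul_eq_mul]
        simp only [hr]
        ring
      rw [hemp] at hif
      have := (lt_div_iff₀ hkpos).1 hif
      linarith [this]
    have hmono := prJoint_mono k x hx.1 _ _ hincl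
    have hunion := prJoint_union k x hx.1
      (fun q : Fin n × (Fin m → Fin m) => fun a => (k : ℝ) * ε < ∑ t, r q.1 q.2 (a t))
    have hcher : ∀ q : Fin n × (Fin m → Fin m),
        PrJoint k x (fun a => (k : ℝ) * ε < ∑ t, r q.1 q.2 (a t))
          ≤ Real.exp (-(k : ℝ) * ε ^ 2 / 2) :=
      fun q => chernoff x hx (r q.1 q.2) (hr1 q.1 q.2) (hr2 q.1 q.2) (hce q.1 q.2) k hε0
    have hsum : ∑ q : Fin n × (Fin m → Fin m),
        PrJoint k x (fun a => (k : ℝ) * ε < ∑ t, r q.1 q.2 (a t))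
          ≤ (n : ℝ) * (m : ℝ) ^ m * Real.exp (-(k : ℝ) * ε ^ 2 / 2) := by
      calc ∑ q : Fin n × (Fin m → Fin m), PrJoint k x
            (fun a => (k : ℝ) * ε < ∑ t, r q.1 q.2 (a t))
          ≤ ∑ _q : Fin n × (Fin m → Fin m), Real.exp (-(k : ℝ) * ε ^ 2 / 2) :=
            Finset.sum_le_sum fun q _ => hcher q
        _ = (n : ℝ) * (m : ℝ) ^ m * Real.exp (-(k : ℝ) * ε ^ 2 / 2) := by
            rw [Finset.sum_const, Finset.card_univ, Fintype.card_prod, Fintype.card_fun,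
              Fintype.card_fin, Fintype.card_fin, nsmul_eq_mul]
            push_cast
            ring
    -- numeric bound
    have hknum : L + Real.log (2 / α) ≤ (k : ℝ) * ε ^ 2 / 2 := by
      have hε2 : 0 < ε ^ 2 := by positivity
      have h1 : (2 / ε ^ 2) * (1 + Real.log (2 / α) / Real.log 2) * L ≤ (k : ℝ) := hk
      have h2 : Real.log (2 / α) / Real.log 2 * L ≥ Real.log (2 / α) := by
        rw [ge_iff_le, div_mul_eq_mul_div, le_div_iff₀ hlog2]
        nlinarith
      have h3 : 2 * ((1 + Real.log (2 / α) / Real.log 2) * L) ≤ (k : ℝ) * ε ^ 2 := by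
        rw [← div_le_iff₀ hε2]
        calc 2 * ((1 + Real.log (2 / α) / Real.log 2) * L) / ε ^ 2
            = (2 / ε ^ 2) * (1 + Real.log (2 / α) / Real.log 2) * L := by ring
          _ ≤ (k : ℝ) := h1
      nlinarith [h2, h3]
    have hnum : (n : ℝ) * (m : ℝ) ^ m * Real.exp (-(k : ℝ) * ε ^ 2 / 2) ≤ α / 2 := by
      have hnm : (0 : ℝ) < (n : ℝ) * (m : ℝ) ^ m := by positivity
      have hlognm : Real.log ((n : ℝ) * (m : ℝ) ^ m) = Real.log n + (m : ℝ) * Real.log m := by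
        rw [Real.log_mul (by positivity) (by positivity), Real.log_pow]
      have key : (n : ℝ) * (m : ℝ) ^ m * Real.exp (-(k : ℝ) * ε ^ 2 / 2)
          = Real.exp (Real.log n + (m : ℝ) * Real.log m - (k : ℝ) * ε ^ 2 / 2) := by
        rw [Real.exp_sub, ← hlognm, Real.exp_log hnm,
          eq_div_iff (Real.exp_ne_zero _), mul_assoc, ← Real.exp_add]
        have h0 : -(k : ℝ) * ε ^ 2 / 2 + (k : ℝ) * ε ^ 2 / 2 = 0 := by ring
        rw [h0, Real.exp_zero, mul_one]
      rw [key]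
      have : Real.exp (Real.log n + (m : ℝ) * Real.log m - (k : ℝ) * ε ^ 2 / 2)
          ≤ Real.exp (- Real.log (2 / α)) := by
        apply Real.exp_le_exp.2
        simp only [hL] at hknum
        linarith
      calc Real.exp (Real.log n + (m : ℝ) * Real.log m - (k : ℝ) * ε ^ 2 / 2)
          ≤ Real.exp (- Real.log (2 / α)) := this
        _ = α / 2 := by
            rw [Real.exp_neg, Real.exp_log (by positivity)]
            field_simp
    rw [prJoint_compl k x hx (fun a => IsCE u (empJoint k a) ε)]
    have hbad : PrJoint k x (fun a => ¬ IsCE u (empJoint k a) ε) ≤ α / 2 :=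
      le_trans hmono (le_trans hunion (le_trans hsum hnum))
    linarith
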